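/- Fix a point-hyperplane antiflag (p, φ) of V(n,2). The number of antiflags (p', φ') such that exactly one of the two conditions φ'(p) = 0 and φ(p') = 0 holds (relation A₁) equals (2^{n−1} − 1)·2^{n−1}. -/

import Mathlib

open Module

private lemma pair_indep {n : ℕ} (u v : Fin n → ZMod 2) (hu : u ≠ 0) (hv : v ≠ 0)
    (huv : u ≠ v) : LinearIndependent (ZMod 2) ![u, v] := by
  rw [LinearIndependent.pair_iff]
  intro s t hst
  rcases (by decide : ∀ x : ZMod 2, x = 0 ∨ x = 1) s with rfl | rfl <;> rcases (by decide : ∀ x : ZMod 2, x = 0 ∨ x = 1) t with rfl | rfl <;> simp_all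
  exact huv (by rw [eq_neg_of_add_eq_zero_left hst, ← neg_one_smul (ZMod 2) v,
    show (-1 : ZMod 2) = 1 by decide, one_smul])

private lemma exists_dual {n : ℕ} (u v : Fin n → ZMod 2) (hu : u ≠ 0) (hv : v ≠ 0)
    (huv : u ≠ v) (a b : ZMod 2) :
    ∃ ψ : (Fin n → ZMod 2) →ₗ[ZMod 2] ZMod 2, ψ u = a ∧ ψ v = b := by
  have hli : LinearIndepOn (ZMod 2) id ({u, v} : Set (Fin n → ZMod 2)) := by
    have h : LinearIndepOn (ZMod 2) id (Set.range ![u, v]) :=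
      (linearIndepOn_id_range_iff (pair_indep u v hu hv huv).injective).mpr (pair_indep u v hu hv huv)
    have : Set.range ![u, v] = {u, v} := by
      ext x
      simp [Matrix.range_cons, Matrix.range_empty]
      tauto
    rwa [this] at h
  set B := Module.Basis.extend hli with hB
  have hsub : ({u, v} : Set (Fin n → ZMod 2)) ⊆ LinearIndepOn.extend hli (Set.subset_univ _) :=
    LinearIndepOn.subset_extend hli _
  have hu' : u ∈ LinearIndepOn.extend hli (Set.subset_univ _) := hsub (by simp)
  have hv' : v ∈ LinearIndepOn.extend hli (Set.subset_univ _) := hsub (by simp)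
  set g : LinearIndepOn.extend hli (Set.subset_univ _) → ZMod 2 :=
    fun x => if (x : Fin n → ZMod 2) = u then a else b with hg
  refine ⟨B.constr (ZMod 2) g, ?_, ?_⟩
  · have hc := B.constr_basis (ZMod 2) g ⟨u, hu'⟩
    rw [hB, Module.Basis.extend_apply_self] at hc
    simpa [hg] using hc
  · have hc := B.constr_basis (ZMod 2) g ⟨v, hv'⟩
    rw [hB, Module.Basis.extend_apply_self] at hc
    simpa [hg, huv.symm] using hc

private lemma fiber_card {n : ℕ} (hn : 2 ≤ n) (u v : Fin n → ZMod 2) (hu : u ≠ 0)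
    (hv : v ≠ 0) (huv : u ≠ v) (a b : ZMod 2) :
    Nat.card {ψ : (Fin n → ZMod 2) →ₗ[ZMod 2] ZMod 2 // ψ u = a ∧ ψ v = b}
      = 2 ^ (n - 2) := by
  haveI : Finite ((Fin n → ZMod 2) →ₗ[ZMod 2] ZMod 2) :=
    Finite.of_injective _ DFunLike.coe_injective
  set L : ((Fin n → ZMod 2) →ₗ[ZMod 2] ZMod 2) →ₗ[ZMod 2] ZMod 2 × ZMod 2 :=
    { toFun := fun ψ => (ψ u, ψ v)
      map_add' := fun ψ χ => by simp
      map_smul' := fun c ψ => by simp } with hL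
  have hsurj : Function.Surjective L := by
    rintro ⟨a', b'⟩
    obtain ⟨ψ, h1, h2⟩ := exists_dual u v hu hv huv a' b'
    exact ⟨ψ, by simp [hL, h1, h2]⟩
  obtain ⟨ψ₀, h1, h2⟩ := exists_dual u v hu hv huv a b
  -- the fiber is equivalent to the kernel
  have e : {ψ : (Fin n → ZMod 2) →ₗ[ZMod 2] ZMod 2 // ψ u = a ∧ ψ v = b} ≃
      LinearMap.ker L :=
    { toFun := fun ψ => ⟨ψ.1 - ψ₀, by
        have := ψ.2
        simp [LinearMap.mem_ker, hL, this.1, this.2, h1, h2, Prod.ext_iff]⟩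
      invFun := fun k => ⟨k.1 + ψ₀, by
        have := k.2
        simp only [LinearMap.mem_ker, hL, LinearMap.coe_mk, AddHom.coe_mk, Prod.mk_eq_zero] at this
        simp [this.1, this.2, h1, h2]⟩
      left_inv := fun ψ => by simp
      right_inv := fun k => by simp }
  rw [Nat.card_congr e]
  -- now count the kernel
  have hrank : finrank (ZMod 2) ((Fin n → ZMod 2) →ₗ[ZMod 2] ZMod 2) = n := by
    rw [Module.finrank_linearMap, Module.finrank_fin_fun, finrank_self, mul_one]
  have hrange : finrank (ZMod 2) (LinearMap.range L) = 2 := by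
    rw [LinearMap.range_eq_top.mpr hsurj, finrank_top, Module.finrank_prod, finrank_self]
  have hker : finrank (ZMod 2) (LinearMap.ker L) = n - 2 := by
    have h3 := LinearMap.finrank_range_add_finrank_ker L
    rw [hrange, hrank] at h3
    omega
  haveI : Fintype (LinearMap.ker L) := Fintype.ofFinite _
  have h4 := card_eq_pow_finrank (K := ZMod 2) (V := LinearMap.ker L)
  rw [Nat.card_eq_fintype_card, h4, hker, ZMod.card]

private lemma nat_card_sigma {ι : Type*} [Fintype ι] (f : ι → Type*) [∀ i, Finite (f i)] :
    Nat.card (Σ i, f i) = ∑ i, Nat.card (f i) := by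
  haveI : ∀ i, Fintype (f i) := fun i => Fintype.ofFinite _
  simp [Nat.card_eq_fintype_card]

/-- A point-hyperplane antiflag of `V(n,2)`: a pair `(p, φ)` of a nonzero vector `p`
and a linear functional `φ` with `φ p = 1`. -/
def IsAntiflag (n : ℕ) (x : (Fin n → ZMod 2) × ((Fin n → ZMod 2) →ₗ[ZMod 2] ZMod 2)) : Prop :=
  x.1 ≠ 0 ∧ x.2 x.1 = 1

/-- Relation `A₁`: fixing an antiflag `(p, φ)`, the number of antiflags `(p', φ')` such that
exactly one of `φ' p = 0` and `φ p' = 0` holds is `(2^(n-1) - 1) * 2^(n-1)`. -/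
theorem card_relation_A1 (n : ℕ) (hn : 2 ≤ n)
    (p : Fin n → ZMod 2) (φ : (Fin n → ZMod 2) →ₗ[ZMod 2] ZMod 2)
    (h : IsAntiflag n (p, φ)) :
    Nat.card {x : (Fin n → ZMod 2) × ((Fin n → ZMod 2) →ₗ[ZMod 2] ZMod 2) //
      IsAntiflag n x ∧ Xor' (x.2 p = 0) (φ x.1 = 0)} = (2^(n-1) - 1) * 2^(n-1) := by
  obtain ⟨hp, hφp⟩ := h
  simp only at hp hφp
  haveI : Finite ((Fin n → ZMod 2) →ₗ[ZMod 2] ZMod 2) :=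
    Finite.of_injective _ DFunLike.coe_injective
  classical
  have hz : ∀ x : ZMod 2, ¬x = 0 ↔ x = 1 := by decide
  have e := Equiv.subtypeProdEquivSigmaSubtype
    (fun (a : Fin n → ZMod 2) (b : (Fin n → ZMod 2) →ₗ[ZMod 2] ZMod 2) =>
      IsAntiflag n (a, b) ∧ Xor' (b p = 0) (φ a = 0))
  rw [Nat.card_congr e, nat_card_sigma]
  have key : ∀ p' : Fin n → ZMod 2,
      Nat.card {φ' : (Fin n → ZMod 2) →ₗ[ZMod 2] ZMod 2 //
        IsAntiflag n (p', φ') ∧ Xor' (φ' p = 0) (φ p' = 0)}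
      = if p' = 0 ∨ p' = p then 0 else 2 ^ (n - 2) := by
    intro p'
    by_cases h0 : p' = 0
    · rw [if_pos (Or.inl h0)]
      haveI : IsEmpty {φ' : (Fin n → ZMod 2) →ₗ[ZMod 2] ZMod 2 //
          IsAntiflag n (p', φ') ∧ Xor' (φ' p = 0) (φ p' = 0)} :=
        ⟨fun x => x.2.1.1 h0⟩
      exact Nat.card_of_isEmpty
    by_cases hpp : p' = p
    · rw [if_pos (Or.inr hpp)]
      haveI : IsEmpty {φ' : (Fin n → ZMod 2) →ₗ[ZMod 2] ZMod 2 //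
          IsAntiflag n (p', φ') ∧ Xor' (φ' p = 0) (φ p' = 0)} := by
        refine ⟨fun x => ?_⟩
        obtain ⟨φ', ⟨⟨hne, hval⟩, hxor⟩⟩ := x
        subst hpp
        rcases hxor with ⟨h2, _⟩ | ⟨h2, _⟩ <;> simp_all
      exact Nat.card_of_isEmpty
    rw [if_neg (by tauto)]
    rcases (show φ p' = 0 ∨ φ p' = 1 from by
      rcases hz (φ p') with ⟨h1, h2⟩; by_cases hc : φ p' = 0; exact Or.inl hc
      exact Or.inr (h1 hc)) with hc | hc
    · have equiv : ∀ φ' : (Fin n → ZMod 2) →ₗ[ZMod 2] ZMod 2,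
          (IsAntiflag n (p', φ') ∧ Xor' (φ' p = 0) (φ p' = 0)) ↔ (φ' p = 1 ∧ φ' p' = 1) := by
        intro φ'
        constructor
        · rintro ⟨⟨_, hap⟩, hxor⟩
          rcases hxor with ⟨_, hn2⟩ | ⟨_, hn2⟩
          · exact absurd hc hn2
          · exact ⟨(hz _).mp hn2, hap⟩
        · rintro ⟨h1, h2⟩
          exact ⟨⟨h0, h2⟩, Or.inr ⟨hc, by rw [h1]; exact one_ne_zero⟩⟩
      rw [Nat.card_congr (Equiv.subtypeEquivRight equiv)]
      exact fiber_card hn p p' hp h0 (fun hh => hpp hh.symm) 1 1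
    · have equiv : ∀ φ' : (Fin n → ZMod 2) →ₗ[ZMod 2] ZMod 2,
          (IsAntiflag n (p', φ') ∧ Xor' (φ' p = 0) (φ p' = 0)) ↔ (φ' p = 0 ∧ φ' p' = 1) := by
        intro φ'
        constructor
        · rintro ⟨⟨_, hap⟩, hxor⟩
          rcases hxor with ⟨h1, _⟩ | ⟨h1, _⟩
          · exact ⟨h1, hap⟩
          · rw [hc] at h1; exact absurd h1 one_ne_zero
        · rintro ⟨h1, h2⟩
          exact ⟨⟨h0, h2⟩, Or.inl ⟨h1, by rw [hc]; exact one_ne_zero⟩⟩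
      rw [Nat.card_congr (Equiv.subtypeEquivRight equiv)]
      exact fiber_card hn p p' hp h0 (fun hh => hpp hh.symm) 0 1
  rw [Finset.sum_congr rfl (fun p' _ => key p')]
  rw [Finset.sum_ite, Finset.sum_const, Finset.sum_const]
  have hcard : (Finset.univ.filter
      (fun p' : Fin n → ZMod 2 => ¬(p' = 0 ∨ p' = p))).card = 2 ^ n - 2 := by
    have hst : (Finset.univ.filter (fun p' : Fin n → ZMod 2 => ¬(p' = 0 ∨ p' = p)))
        = Finset.univ \ {0, p} := by
      ext x
      simp [not_or]
    rw [hst, Finset.card_sdiff_of_subset (Finset.subset_univ _), Finset.card_insert_of_notMem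
      (by simpa using (Ne.symm hp : (0 : Fin n → ZMod 2) ≠ p)), Finset.card_singleton]
    congr 1
    simp [Fintype.card_fun]
  rw [hcard, smul_zero, zero_add, smul_eq_mul]
  obtain ⟨m, rfl⟩ : ∃ m, n = m + 2 := ⟨n - 2, by omega⟩
  have hk : 1 ≤ 2 ^ m := Nat.one_le_two_pow
  have e1 : m + 2 - 2 = m := by omega
  have e2 : m + 2 - 1 = m + 1 := by omega
  have e3 : (2 : ℕ) ^ (m + 2) = 4 * 2 ^ m := by ring
  have e4 : (2 : ℕ) ^ (m + 1) = 2 * 2 ^ m := by ring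
  rw [e1, e2, e3, e4]
  obtain ⟨j, hj⟩ : ∃ j, 2 ^ m = j + 1 := ⟨2 ^ m - 1, by omega⟩
  rw [hj, show 4 * (j + 1) - 2 = 4 * j + 2 by omega,
    show 2 * (j + 1) - 1 = 2 * j + 1 by omega]
  ring
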